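/- Let k₁, k₃ ∈ ℝ and let λ : ℝ → ℝ be twice differentiable with λ'(t) ≠ 0 for all t. Let A, B, C, F : ℝ → ℝ be differentiable with B(t) ≠ 0 and C(t) ≠ 0 for all t, and let Ã, B̃, C̃, F̃ : ℝ → ℝ be differentiable with Ã(λ(t)) = e^{5k₁} A(t)/λ'(t), B̃(λ(t)) = e^{3k₁} B(t)/λ'(t), C̃(λ(t)) = e^{3k₁-k₃} C(t)/λ'(t), F̃(λ(t)) = e^{3k₁-k₃} F(t)/λ'(t) for all t. Then for every t, Ã(λ(t)) (Ã'(λ(t)) F̃(λ(t)) − Ã(λ(t)) F̃'(λ(t)))² / (B̃(λ(t))⁵ C̃(λ(t))²) = A(t) (A'(t) F(t) − A(t) F'(t))² / (B(t)⁵ C(t)²). That is, J₄⁽¹⁾ = A(A_t F − A F_t)²/(B⁵C²) is a differential invariant of first order of the equivalence group of subclass (3). -/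

import Mathlib

lemma chain_deriv (c : ℝ) (lam g gt : ℝ → ℝ)
    (hlam : Differentiable ℝ lam) (hlam2 : Differentiable ℝ (deriv lam))
    (hlam' : ∀ t, deriv lam t ≠ 0)
    (hg : Differentiable ℝ g) (hgt : Differentiable ℝ gt)
    (h : ∀ t, gt (lam t) = c * g t / deriv lam t) :
    ∀ t, deriv gt (lam t) =
      c * (deriv g t * deriv lam t - g t * deriv (deriv lam) t) / (deriv lam t) ^ 3 := by
  intro t
  have hcomp : (fun s => gt (lam s)) = fun s => c * g s / deriv lam s := funext h
  have h1 : deriv (fun s => gt (lam s)) t = deriv gt (lam t) * deriv lam t :=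
    deriv_comp t (hgt (lam t)) (hlam t)
  have h2 : deriv (fun s => c * g s / deriv lam s) t
      = (c * deriv g t * deriv lam t - c * g t * deriv (deriv lam) t) / (deriv lam t) ^ 2 := by
    rw [show (fun s => c * g s / deriv lam s) = (fun y => c * g y) / deriv lam from rfl,
      deriv_div ((hg t).const_mul c) (hlam2 t) (hlam' t), deriv_const_mul c (hg t)]
  rw [hcomp, h2] at h1
  have hL := hlam' t
  field_simp at h1 ⊢
  linarith [h1]

theorem J4_first_order_invariant
    (k₁ k₃ : ℝ)
    (lam : ℝ → ℝ) (hlam : Differentiable ℝ lam)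
    (hlam2 : Differentiable ℝ (deriv lam)) (hlam' : ∀ t, deriv lam t ≠ 0)
    (A B C F : ℝ → ℝ) (hA : Differentiable ℝ A) (hB : Differentiable ℝ B)
    (hC : Differentiable ℝ C) (hF : Differentiable ℝ F)
    (hBne : ∀ t, B t ≠ 0) (hCne : ∀ t, C t ≠ 0)
    (At Bt Ct Ft : ℝ → ℝ) (hAt : Differentiable ℝ At) (hBt : Differentiable ℝ Bt)
    (hCt : Differentiable ℝ Ct) (hFt : Differentiable ℝ Ft)
    (hAtr : ∀ t, At (lam t) = Real.exp (5 * k₁) * A t / deriv lam t)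
    (hBtr : ∀ t, Bt (lam t) = Real.exp (3 * k₁) * B t / deriv lam t)
    (hCtr : ∀ t, Ct (lam t) = Real.exp (3 * k₁ - k₃) * C t / deriv lam t)
    (hFtr : ∀ t, Ft (lam t) = Real.exp (3 * k₁ - k₃) * F t / deriv lam t) :
    ∀ t,
      At (lam t) * (deriv At (lam t) * Ft (lam t) - At (lam t) * deriv Ft (lam t)) ^ 2
          / (Bt (lam t) ^ 5 * Ct (lam t) ^ 2)
        = A t * (deriv A t * F t - A t * deriv F t) ^ 2 / (B t ^ 5 * C t ^ 2) := by
  intro t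
  have hA' := chain_deriv _ lam A At hlam hlam2 hlam' hA hAt hAtr t
  have hF' := chain_deriv _ lam F Ft hlam hlam2 hlam' hF hFt hFtr t
  have h5 : Real.exp (5 * k₁) = Real.exp k₁ ^ 5 := by
    rw [← Real.exp_nat_mul]; norm_num
  have h3 : Real.exp (3 * k₁) = Real.exp k₁ ^ 3 := by
    rw [← Real.exp_nat_mul]; norm_num
  rw [h5] at hAtr hA'
  rw [h3] at hBtr
  rw [hAtr t, hBtr t, hCtr t, hFtr t, hA', hF']
  have hL := hlam' t
  have e1 := Real.exp_ne_zero (5 * k₁)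
  have e2 := Real.exp_ne_zero (3 * k₁)
  have e3 := Real.exp_ne_zero (3 * k₁ - k₃)
  have hBn := hBne t
  have hCn := hCne t
  field_simp
  ring
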